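/- If P is a polytope in ℝ^m containing the origin and L is a linear subspace of ℝ^m, then the orthogonal projection of the polar set P° onto L equals (P ∩ L)° ∩ L, where polarity is taken in ℝ^m. -/

import Mathlib

open RealInnerProductSpace

/-- Polar set: `{x | ⟪x, y⟫ ≤ 1 for all y ∈ P}`. -/
def polarSet {m : ℕ} (P : Set (EuclideanSpace ℝ (Fin m))) : Set (EuclideanSpace ℝ (Fin m)) :=
  {x | ∀ y ∈ P, ⟪x, y⟫ ≤ 1}

section Cone

variable {F : Type*} [NormedAddCommGroup F] [NormedSpace ℝ F] [FiniteDimensional ℝ F]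
variable {ι : Type*} [Fintype ι] [DecidableEq ι]

set_option linter.unusedSectionVars false

lemma sum_supp_eq (v : ι → F) (s : Finset ι) (lam : ι → ℝ) (hsupp : ∀ i ∉ s, lam i = 0) :
    ∑ i : s, lam i • v i = ∑ i, lam i • v i := by
  rw [Finset.sum_coe_sort s (fun i => lam i • v i)]
  exact Finset.sum_subset (Finset.subset_univ s)
    (fun i _ hi => by rw [hsupp i hi, zero_smul])

/-- Points expressible as nonneg combinations of `v` with support in `s`. -/
def coneSupp (v : ι → F) (s : Finset ι) : Set F :=
  {x | ∃ lam : ι → ℝ, (∀ i, 0 ≤ lam i) ∧ (∀ i ∉ s, lam i = 0) ∧ ∑ i, lam i • v i = x}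

lemma isClosed_coneSupp (v : ι → F) (s : Finset ι)
    (hs : LinearIndependent ℝ (fun i : s => v i)) : IsClosed (coneSupp v s) := by
  classical
  set T : (s → ℝ) →ₗ[ℝ] F :=
    { toFun := fun lam => ∑ i : s, lam i • v i
      map_add' := by intro a b; simp [add_smul, Finset.sum_add_distrib]
      map_smul' := by intro c a; simp [smul_smul, Finset.smul_sum] } with hT
  have hker : LinearMap.ker T = ⊥ := by
    rw [LinearMap.ker_eq_bot']
    intro g hg
    have := (Fintype.linearIndependent_iff.mp hs) g hg
    funext i; exact this i
  have hembed := LinearMap.isClosedEmbedding_of_injective hker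
  have hcl : IsClosed {lam : s → ℝ | ∀ i, 0 ≤ lam i} := by
    have : {lam : s → ℝ | ∀ i, 0 ≤ lam i} = ⋂ i, {lam | 0 ≤ lam i} := by
      ext; simp [Set.mem_iInter]
    rw [this]
    exact isClosed_iInter fun i => isClosed_le continuous_const (continuous_apply i)
  have himg : coneSupp v s = T '' {lam : s → ℝ | ∀ i, 0 ≤ lam i} := by
    ext x
    constructor
    · rintro ⟨lam, h0, hsupp, rfl⟩
      exact ⟨fun i => lam i, fun i => h0 i, sum_supp_eq v s lam hsupp⟩
    · rintro ⟨lam, h0, rfl⟩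
      set lam' : ι → ℝ := fun i => if h : i ∈ s then lam ⟨i, h⟩ else 0 with hlam'
      have hsupp : ∀ i ∉ s, lam' i = 0 := fun i hi => dif_neg hi
      refine ⟨lam', ?_, hsupp, ?_⟩
      · intro i
        by_cases h : i ∈ s
        · simp only [hlam', dif_pos h]; exact h0 _
        · simp only [hlam', dif_neg h]; exact le_refl 0
      · rw [← sum_supp_eq v s lam' hsupp]
        show ∑ i : s, lam' i • v i = ∑ i : s, lam i • v i
        refine Finset.sum_congr rfl fun i _ => ?_
        simp only [hlam', dif_pos i.2]
  rw [himg]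
  exact hembed.isClosedMap _ hcl

lemma cone_caratheodory (v : ι → F) (n : ℕ) (s : Finset ι) (hcard : s.card ≤ n)
    (lam : ι → ℝ) (h0 : ∀ i, 0 ≤ lam i) (hsupp : ∀ i ∉ s, lam i = 0) :
    ∃ t : Finset ι, LinearIndependent ℝ (fun i : t => v i) ∧
      (∑ i, lam i • v i) ∈ coneSupp v t := by
  classical
  induction n generalizing s lam with
  | zero =>
    have hs : s = ∅ := Finset.card_eq_zero.mp (Nat.le_zero.mp hcard)
    subst hs
    refine ⟨∅, linearIndependent_empty_type, lam, h0, hsupp, rfl⟩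
  | succ n ih =>
    by_cases hind : LinearIndependent ℝ (fun i : s => v i)
    · exact ⟨s, hind, lam, h0, hsupp, rfl⟩
    · -- get a nontrivial dependency supported in s
      obtain ⟨g, hg0, i₁, hi₁⟩ := Fintype.not_linearIndependent_iff.mp hind
      set g' : ι → ℝ := fun i => if h : i ∈ s then g ⟨i, h⟩ else 0 with hg'
      have hg'supp : ∀ i ∉ s, g' i = 0 := fun i hi => dif_neg hi
      have hg'sum : ∑ i, g' i • v i = 0 := by
        rw [← Finset.sum_subset (Finset.subset_univ s)
          (fun i _ hi => by rw [hg'supp i hi, zero_smul]),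
          ← Finset.sum_coe_sort s (fun i => g' i • v i)]
        rw [← hg0]
        exact Finset.sum_congr rfl fun i _ => by simp only [hg', dif_pos i.2]
      have hg'ne : g' (i₁ : ι) ≠ 0 := by simpa only [hg', dif_pos i₁.2] using hi₁
      -- WLOG some coordinate of the dependency is positive
      obtain ⟨h, hhsupp, hhsum, j, hjs, hj⟩ :
          ∃ h : ι → ℝ, (∀ i ∉ s, h i = 0) ∧ (∑ i, h i • v i = 0) ∧ ∃ j, j ∈ s ∧ 0 < h j := by
        rcases lt_or_gt_of_ne hg'ne with hneg | hpos
        · refine ⟨-g', fun i hi => by simp [hg'supp i hi], by simp [hg'sum], i₁, i₁.2, ?_⟩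
          simpa using hneg
        · exact ⟨g', hg'supp, hg'sum, i₁, i₁.2, hpos⟩
      -- minimize lam i / h i over positive coordinates
      have hne : (s.filter fun i => 0 < h i).Nonempty := ⟨j, Finset.mem_filter.mpr ⟨hjs, hj⟩⟩
      obtain ⟨i₀, hi₀mem, hi₀min⟩ :=
        Finset.exists_min_image (s.filter fun i => 0 < h i) (fun i => lam i / h i) hne
      rw [Finset.mem_filter] at hi₀mem
      obtain ⟨hi₀s, hi₀pos⟩ := hi₀mem
      set t₀ : ℝ := lam i₀ / h i₀ with ht₀
      have ht₀0 : 0 ≤ t₀ := div_nonneg (h0 i₀) hi₀pos.le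
      set lam' : ι → ℝ := fun i => lam i - t₀ * h i with hlam'
      have hlam'0 : ∀ i, 0 ≤ lam' i := by
        intro i
        by_cases his : i ∈ s
        · by_cases hip : 0 < h i
          · have := hi₀min i (Finset.mem_filter.mpr ⟨his, hip⟩)
            have : t₀ * h i ≤ lam i := by
              rw [ht₀]
              calc (lam i₀ / h i₀) * h i ≤ (lam i / h i) * h i := by
                    exact mul_le_mul_of_nonneg_right this hip.le
                _ = lam i := div_mul_cancel₀ _ hip.ne'
            simpa [hlam'] using this
          · have h1 : t₀ * h i ≤ 0 := mul_nonpos_of_nonneg_of_nonpos ht₀0 (not_lt.mp hip)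
            have h2 := h0 i
            simp only [hlam']; linarith
        · simp [hlam', hhsupp i his, hsupp i his]
      have hlam'i₀ : lam' i₀ = 0 := by
        simp only [hlam', ht₀]
        field_simp
        ring
      have hlam'supp : ∀ i ∉ s.erase i₀, lam' i = 0 := by
        intro i hi
        rcases Finset.mem_erase.not.mp hi with hi'
        by_cases his : i ∈ s
        · have : i = i₀ := by tauto
          rw [this]; exact hlam'i₀
        · simp [hlam', hhsupp i his, hsupp i his]
      have hsum' : ∑ i, lam' i • v i = ∑ i, lam i • v i := by
        have : ∑ i, lam' i • v i = ∑ i, (lam i • v i - t₀ • (h i • v i)) := by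
          refine Finset.sum_congr rfl fun i _ => ?_
          simp only [hlam', sub_smul, smul_smul]
        rw [this, Finset.sum_sub_distrib, ← Finset.smul_sum, hhsum, smul_zero, sub_zero]
      have hcard' : (s.erase i₀).card ≤ n := by
        have := Finset.card_erase_of_mem hi₀s
        omega
      obtain ⟨t, hti, htm⟩ := ih (s.erase i₀) hcard' lam' hlam'0 hlam'supp
      rw [hsum'] at htm
      exact ⟨t, hti, htm⟩

def coneOf (v : ι → F) : Set F :=
  {x | ∃ lam : ι → ℝ, (∀ i, 0 ≤ lam i) ∧ ∑ i, lam i • v i = x}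

lemma isClosed_coneOf (v : ι → F) : IsClosed (coneOf v) := by
  classical
  have : coneOf v =
      ⋃ t ∈ {t : Finset ι | LinearIndependent ℝ (fun i : t => v i)}, coneSupp v t := by
    ext x
    simp only [Set.mem_iUnion, Set.mem_setOf_eq]
    constructor
    · rintro ⟨lam, h0, rfl⟩
      obtain ⟨t, hti, htm⟩ := cone_caratheodory v (Finset.univ.card) Finset.univ le_rfl lam h0
        (fun i hi => absurd (Finset.mem_univ i) hi)
      exact ⟨t, hti, htm⟩
    · rintro ⟨t, _, lam, h0, _, rfl⟩
      exact ⟨lam, h0, rfl⟩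
  rw [this]
  exact Set.Finite.isClosed_biUnion (Set.toFinite _) (fun t ht => isClosed_coneSupp v t ht)

lemma convex_coneOf (v : ι → F) : Convex ℝ (coneOf v) := by
  rintro x ⟨lx, hlx, rfl⟩ y ⟨ly, hly, rfl⟩ a b ha hb _
  refine ⟨fun i => a * lx i + b * ly i,
    fun i => add_nonneg (mul_nonneg ha (hlx i)) (mul_nonneg hb (hly i)), ?_⟩
  simp only [add_smul, mul_smul, Finset.sum_add_distrib, ← Finset.smul_sum]

lemma smul_mem_coneOf (v : ι → F) {x : F} (hx : x ∈ coneOf v) {t : ℝ} (ht : 0 ≤ t) :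
    t • x ∈ coneOf v := by
  obtain ⟨lam, h0, rfl⟩ := hx
  exact ⟨fun i => t * lam i, fun i => mul_nonneg ht (h0 i),
    by simp only [mul_smul, ← Finset.smul_sum]⟩


end Cone

-- Farkas-type feasibility lemma
lemma farkas {m : ℕ} {ι : Type} [Fintype ι] [DecidableEq ι]
    (b : ι → EuclideanSpace ℝ (Fin m)) (c : ι → ℝ)
    (H : ∀ lam : ι → ℝ, (∀ i, 0 ≤ lam i) → ∑ i, lam i • b i = 0 → 0 ≤ ∑ i, lam i * c i) :
    ∃ w : EuclideanSpace ℝ (Fin m), ∀ i, ⟪w, b i⟫ ≤ c i := by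
  classical
  set v : Option ι → EuclideanSpace ℝ (Fin m) × ℝ := fun j => j.elim (0, (1 : ℝ)) (fun i => (b i, c i)) with hv
  have hnmem : ((0 : EuclideanSpace ℝ (Fin m)), (-1 : ℝ)) ∉ coneOf v := by
    rintro ⟨lam, h0, hsum⟩
    rw [Fintype.sum_option] at hsum
    have h1 : ∑ i, (lam (some i)) • b i = 0 := by
      have := congrArg Prod.fst hsum
      simpa [hv, Prod.fst_sum] using this
    have h2 : lam none + ∑ i, lam (some i) * c i = -1 := by
      have := congrArg Prod.snd hsum
      simpa [hv, Prod.snd_sum, smul_eq_mul] using this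
    have := H (fun i => lam (some i)) (fun i => h0 _) h1
    have := h0 none
    linarith
  obtain ⟨f, u, hfu, hub⟩ := geometric_hahn_banach_closed_point
    (convex_coneOf v) (isClosed_coneOf v) hnmem
  have h0C : (0 : EuclideanSpace ℝ (Fin m) × ℝ) ∈ coneOf v := ⟨0, fun i => le_rfl, by simp⟩
  have hu0 : 0 < u := by simpa using hfu 0 h0C
  have hfle : ∀ a ∈ coneOf v, f a ≤ 0 := by
    intro a ha
    by_contra hpos
    push_neg at hpos
    have ht : (0:ℝ) ≤ (u + 1) / f a := by positivity
    have := hfu _ (smul_mem_coneOf v ha ht)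
    rw [map_smul, smul_eq_mul, div_mul_cancel₀ _ hpos.ne'] at this
    linarith
  -- α = f(0,1) < 0
  set α : ℝ := f (0, (1 : ℝ)) with hα
  have hαneg : α < 0 := by
    have : f ((0 : EuclideanSpace ℝ (Fin m)), (-1:ℝ)) = -α := by
      rw [hα, ← map_neg]; norm_num
    rw [this] at hub
    linarith
  -- Riesz representation of w ↦ f (w, 0)
  set g : EuclideanSpace ℝ (Fin m) →L[ℝ] ℝ :=
    f.comp (ContinuousLinearMap.inl ℝ (EuclideanSpace ℝ (Fin m)) ℝ) with hg
  set w₀ : EuclideanSpace ℝ (Fin m) := (InnerProductSpace.toDual ℝ _).symm g with hw₀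
  have hw₀app : ∀ x : EuclideanSpace ℝ (Fin m), ⟪w₀, x⟫ = g x := fun x =>
    InnerProductSpace.toDual_symm_apply
  refine ⟨(-α)⁻¹ • w₀, fun i => ?_⟩
  have hvi : v (some i) ∈ coneOf v := by
    refine ⟨fun j => if j = some i then 1 else 0, fun j => by positivity, ?_⟩
    simp [Finset.sum_ite_eq']
  have hfi := hfle _ hvi
  have hsplit : f (b i, c i) = g (b i) + c i * α := by
    have : ((b i, c i) : EuclideanSpace ℝ (Fin m) × ℝ)
        = (b i, 0) + (c i) • (0, (1:ℝ)) := by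
      simp [Prod.ext_iff]
    rw [this, map_add, map_smul, smul_eq_mul]
    rfl
  rw [hv] at hfi
  simp only [Option.elim] at hfi
  rw [hsplit] at hfi
  have hinner : ⟪w₀, b i⟫ ≤ -(c i * α) := by rw [hw₀app]; linarith
  rw [real_inner_smul_left]
  have hpos : 0 < -α := by linarith
  rw [inv_mul_le_iff₀ hpos, show -α * c i = -(c i * α) by ring]
  exact hinner

theorem polar_proj_eq_polar_inter {m : ℕ} (S : Set (EuclideanSpace ℝ (Fin m)))
    (hS : S.Finite) (P : Set (EuclideanSpace ℝ (Fin m))) (hP : P = convexHull ℝ S)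
    (h0 : (0 : EuclideanSpace ℝ (Fin m)) ∈ P) (L : Submodule ℝ (EuclideanSpace ℝ (Fin m))) :
    (fun x => ((Submodule.orthogonalProjection L x : EuclideanSpace ℝ (Fin m)))) '' polarSet P
      = polarSet (P ∩ (L : Set (EuclideanSpace ℝ (Fin m)))) ∩ (L : Set (EuclideanSpace ℝ (Fin m))) := by
  classical
  set Q : EuclideanSpace ℝ (Fin m) →L[ℝ] EuclideanSpace ℝ (Fin m) :=
    L.subtypeL.comp (Submodule.orthogonalProjection L) with hQ
  have hQdef : ∀ x, Q x = ((Submodule.orthogonalProjection L x : EuclideanSpace ℝ (Fin m))) := fun _ => rfl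
  have hQmem : ∀ x, Q x ∈ L := fun x => (Submodule.orthogonalProjection L x).2
  have hQid : ∀ x ∈ L, Q x = x := fun x hx => Submodule.starProjection_eq_self_iff.mpr hx
  have hQorth : ∀ x, x - Q x ∈ Lᗮ := fun x => Submodule.sub_starProjection_mem_orthogonal (K := L) x
  apply Set.Subset.antisymm
  · rintro _ ⟨x, hx, rfl⟩
    refine ⟨?_, hQmem x⟩
    rintro y ⟨hyP, hyL⟩
    have key : ⟪Q x, y⟫ = ⟪x, y⟫ := by
      have h1 : ⟪x - Q x, y⟫ = 0 :=
        Submodule.inner_left_of_mem_orthogonal hyL (hQorth x)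
      have := inner_sub_left (𝕜 := ℝ) x (Q x) y
      rw [h1] at this
      linarith
    show ⟪((Submodule.orthogonalProjection L x : EuclideanSpace ℝ (Fin m))), y⟫ ≤ 1
    rw [← hQdef x, key]
    exact hx y hyP
  · rintro z ⟨hz1, hzL⟩
    set ι := ↥hS.toFinset with hι
    set b : ι → EuclideanSpace ℝ (Fin m) := fun i => (i : EuclideanSpace ℝ (Fin m)) - Q i with hb
    set c : ι → ℝ := fun i => 1 - ⟪z, (i : EuclideanSpace ℝ (Fin m))⟫ with hc
    have H : ∀ lam : ι → ℝ, (∀ i, 0 ≤ lam i) →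
        ∑ i, lam i • b i = 0 → 0 ≤ ∑ i, lam i * c i := by
      intro lam hlam hsum
      set t : ℝ := ∑ i, lam i with ht
      have ht0 : 0 ≤ t := Finset.sum_nonneg fun i _ => hlam i
      rcases eq_or_lt_of_le ht0 with hteq | htpos
      · have hall : ∀ i ∈ Finset.univ, lam i = 0 :=
          (Finset.sum_eq_zero_iff_of_nonneg fun i _ => hlam i).mp hteq.symm
        refine le_of_eq (Finset.sum_eq_zero fun i hi => by rw [hall i hi, zero_mul]).symm
      · have hsum2 : ∑ i, lam i • (i : EuclideanSpace ℝ (Fin m)) = ∑ i, lam i • Q i := by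
          have : ∑ i, (lam i • (i : EuclideanSpace ℝ (Fin m)) - lam i • Q i) = 0 := by
            rw [← hsum]
            exact Finset.sum_congr rfl fun i _ => by rw [hb]; rw [smul_sub]
          rw [Finset.sum_sub_distrib] at this
          linear_combination (norm := module) this
        set u : EuclideanSpace ℝ (Fin m) :=
          t⁻¹ • ∑ i, lam i • (i : EuclideanSpace ℝ (Fin m)) with hu
        have huL : u ∈ L := by
          rw [hu, hsum2]
          exact L.smul_mem _ (Submodule.sum_mem L fun i _ => L.smul_mem _ (hQmem _))
        have huP : u ∈ P := by
          rw [hP]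
          have := Finset.centerMass_mem_convexHull (Finset.univ : Finset ι)
            (fun i _ => hlam i) (by rw [← ht] at *; exact htpos)
            (fun i _ => (hS.mem_toFinset.mp i.2 : (i : EuclideanSpace ℝ (Fin m)) ∈ S))
          rwa [Finset.centerMass, ← ht] at this
        have hzu : ⟪z, u⟫ ≤ 1 := hz1 u ⟨huP, huL⟩
        have hinner : ⟪z, u⟫ = t⁻¹ * ∑ i, lam i * ⟪z, (i : EuclideanSpace ℝ (Fin m))⟫ := by
          rw [hu, real_inner_smul_right, inner_sum]
          congr 1
          exact Finset.sum_congr rfl fun i _ => real_inner_smul_right _ _ _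
        have hle : ∑ i, lam i * ⟪z, (i : EuclideanSpace ℝ (Fin m))⟫ ≤ t := by
          rw [hinner] at hzu
          calc ∑ i, lam i * ⟪z, (i : EuclideanSpace ℝ (Fin m))⟫
              = t * (t⁻¹ * ∑ i, lam i * ⟪z, (i : EuclideanSpace ℝ (Fin m))⟫) := by
                field_simp
            _ ≤ t * 1 := mul_le_mul_of_nonneg_left hzu ht0
            _ = t := mul_one t
        have : ∑ i, lam i * c i = t - ∑ i, lam i * ⟪z, (i : EuclideanSpace ℝ (Fin m))⟫ := by
          rw [ht, ← Finset.sum_sub_distrib]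
          exact Finset.sum_congr rfl fun i _ => by rw [hc]; ring
        rw [this]
        linarith
    obtain ⟨w, hw⟩ := farkas b c H
    refine ⟨z + (w - Q w), ?_, ?_⟩
    · rw [hP]
      show convexHull ℝ S ⊆ {y | ⟪z + (w - Q w), y⟫ ≤ 1}
      apply convexHull_min
      · intro y hyS
        have hi := hw ⟨y, hS.mem_toFinset.mpr hyS⟩
        rw [hb, hc] at hi
        simp only at hi
        have e1 : ⟪w - Q w, Q y⟫ = 0 :=
          Submodule.inner_left_of_mem_orthogonal (hQmem y)
            (by simpa using hQorth w)
        have e2 : ⟪Q w, y - Q y⟫ = 0 :=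
          Submodule.inner_right_of_mem_orthogonal (hQmem w) (hQorth y)
        have expand : ⟪z + (w - Q w), y⟫ = ⟪z, y⟫ + ⟪w, y - Q y⟫ := by
          have d1 : ⟪w - Q w, y⟫ = ⟪w - Q w, Q y⟫ + ⟪w - Q w, y - Q y⟫ := by
            rw [← inner_add_right]
            congr 1
            module
          have d2 : ⟪w - Q w, y - Q y⟫ = ⟪w, y - Q y⟫ - ⟪Q w, y - Q y⟫ :=
            inner_sub_left _ _ _
          rw [inner_add_left, d1, e1, d2, e2]
          ring
        rw [Set.mem_setOf_eq, expand]
        linarith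
      · exact convex_halfSpace_le
          ⟨fun a b' => inner_add_right _ _ _, fun r a => real_inner_smul_right _ _ _⟩ 1
    · show ((Submodule.orthogonalProjection L (z + (w - Q w)) : EuclideanSpace ℝ (Fin m))) = z
      rw [← hQdef, map_add, map_sub, hQid z hzL, hQid (Q w) (hQmem w)]
      simp
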